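/- For every positive integer n there exists an integer N such that every connected graph G with vertex cover number at least N contains an induced subgraph isomorphic to P_n, K_n, K_{n,n}, S_n^2, or F_n. -/
import Mathlib


open SimpleGraph Finset

/-- An independent set: pairwise non-adjacent vertices. -/
def IsIndepSet {V : Type*} (G : SimpleGraph V) (s : Set V) : Prop :=
  s.Pairwise fun a b => ¬ G.Adj a b

/-- `v` is a cut-vertex of `G`: deleting `v` increases the number of connected components. -/
def IsCutVertex {V : Type*} (G : SimpleGraph V) (v : V) : Prop :=
  Nat.card G.ConnectedComponent < Nat.card (G.induce {v}ᶜ).ConnectedComponent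

/-- `G` contains an induced subgraph isomorphic to `H`. -/
def HasInducedCopy {V W : Type*} (G : SimpleGraph V) (H : SimpleGraph W) : Prop :=
  ∃ s : Set V, Nonempty (H ≃g G.induce s)

/-- `H_n^1`: the complete graph on `Fin n` (the `Sum.inl` part) with a pendant vertex
(`Sum.inr i`) attached to each clique vertex `Sum.inl i`. -/
def Hgraph1 (n : ℕ) : SimpleGraph (Fin n ⊕ Fin n) :=
  SimpleGraph.fromRel (fun a b => match a, b with
    | Sum.inl _, Sum.inl _ => True
    | Sum.inl i, Sum.inr j => i = j
    | _, _ => False)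

/-- `H_n^2`: the complete graph on `Fin n` with a path of length 2 attached to each
clique vertex: `Sum.inl i` — `Sum.inr (Sum.inl i)` — `Sum.inr (Sum.inr i)`. -/
def Hgraph2 (n : ℕ) : SimpleGraph (Fin n ⊕ (Fin n ⊕ Fin n)) :=
  SimpleGraph.fromRel (fun a b => match a, b with
    | Sum.inl _, Sum.inl _ => True
    | Sum.inl i, Sum.inr (Sum.inl j) => i = j
    | Sum.inr (Sum.inl i), Sum.inr (Sum.inr j) => i = j
    | _, _ => False)

/-- `T_n`: the complete graph on `Fin n` with a triangle attached at each clique vertex. -/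
def Tgraph (n : ℕ) : SimpleGraph (Fin n ⊕ (Fin n ⊕ Fin n)) :=
  SimpleGraph.fromRel (fun a b => match a, b with
    | Sum.inl _, Sum.inl _ => True
    | Sum.inl i, Sum.inr (Sum.inl j) => i = j
    | Sum.inl i, Sum.inr (Sum.inr j) => i = j
    | Sum.inr (Sum.inl i), Sum.inr (Sum.inr j) => i = j
    | _, _ => False)

/-- `S_n^2`: the spider with `n` legs of length 2 (center `Sum.inl ()`). -/
def Sgraph2 (n : ℕ) : SimpleGraph (Unit ⊕ (Fin n ⊕ Fin n)) :=
  SimpleGraph.fromRel (fun a b => match a, b with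
    | Sum.inl _, Sum.inr (Sum.inl _) => True
    | Sum.inr (Sum.inl i), Sum.inr (Sum.inr j) => i = j
    | _, _ => False)

/-- `F_n`: `n` triangles sharing exactly one common vertex (the center `Sum.inl ()`). -/
def Fgraph (n : ℕ) : SimpleGraph (Unit ⊕ (Fin n ⊕ Fin n)) :=
  SimpleGraph.fromRel (fun a b => match a, b with
    | Sum.inl _, Sum.inr _ => True
    | Sum.inr (Sum.inl i), Sum.inr (Sum.inr j) => i = j
    | _, _ => False)

/-- The matching number of `G`. -/
noncomputable def matchNum {V : Type*} (G : SimpleGraph V) : ℕ :=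
  sSup {k | ∃ M : G.Subgraph, M.IsMatching ∧ M.edgeSet.ncard = k}

/-- The vertex cover number of `G`. -/
noncomputable def coverNum {V : Type*} (G : SimpleGraph V) : ℕ :=
  sInf {k | ∃ s : Set V, (∀ ⦃u w⦄, G.Adj u w → u ∈ s ∨ w ∈ s) ∧ s.ncard = k}


lemma hasInducedCopy_of {V W : Type*} (G : SimpleGraph V) (H : SimpleGraph W)
    (f : W → V) (hf : Function.Injective f)
    (h : ∀ a b, H.Adj a b ↔ G.Adj (f a) (f b)) : HasInducedCopy G H := by
  refine ⟨Set.range f, ⟨{ toEquiv := Equiv.ofInjective f hf, map_rel_iff' := ?_ }⟩⟩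
  intro a b
  simp only [comap_adj, Function.Embedding.coe_subtype, Equiv.ofInjective_apply]
  exact (h a b).symm

lemma exists_inj_fun {ι : Type*} [DecidableEq ι] (s : Finset ι) (q : ℕ) (h : q ≤ s.card) :
    ∃ e : Fin q → ι, Function.Injective e ∧ ∀ j, e j ∈ s := by
  classical
  obtain ⟨t, hts, ht⟩ := Finset.exists_subset_card_eq h
  have e := (t.equivFinOfCardEq ht).symm
  exact ⟨fun j => (e j : ι), fun a b hab => by
    simpa using e.injective (Subtype.ext hab), fun j => hts (e j).2⟩

variable {V : Type*} {G : SimpleGraph V}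

lemma dist_getVert_le (hc : G.Connected) {u v : V} (w : G.Walk u v) (i : ℕ) :
    G.dist u (w.getVert i) ≤ i := by
  induction w generalizing i with
  | nil => simp [SimpleGraph.Walk.getVert, SimpleGraph.dist_self]
  | @cons a b c hab w ih =>
    cases i with
    | zero => simp [SimpleGraph.Walk.getVert]
    | succ i =>
      have h1 : G.dist a (w.getVert i) ≤ G.dist a b + G.dist b (w.getVert i) :=
        hc.dist_triangle
      have h2 : G.dist a b ≤ 1 := by
        rw [← SimpleGraph.dist_eq_one_iff_adj.mpr hab]
      calc G.dist a ((SimpleGraph.Walk.cons hab w).getVert (i+1))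
          = G.dist a (w.getVert i) := rfl
        _ ≤ G.dist a b + G.dist b (w.getVert i) := h1
        _ ≤ 1 + i := by have := ih i; omega
        _ = i + 1 := by omega

lemma dist_getVert_eq (hc : G.Connected) {u v : V} (w : G.Walk u v)
    (hw : w.length = G.dist u v) {i : ℕ} (hi : i ≤ w.length) :
    G.dist u (w.getVert i) = i := by
  have hle := dist_getVert_le hc w i
  have h2 : G.dist (w.getVert i) v ≤ w.length - i := by
    have := dist_getVert_le hc w.reverse (w.length - i)
    rw [SimpleGraph.Walk.getVert_reverse] at this
    have hii : w.length - (w.length - i) = i := by omega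
    rw [hii] at this
    rwa [SimpleGraph.dist_comm]
  have h3 : G.dist u v ≤ G.dist u (w.getVert i) + G.dist (w.getVert i) v :=
    hc.dist_triangle
  omega

lemma induced_path_of_dist {V : Type*} {G : SimpleGraph V} (hc : G.Connected) {x y : V}
    {n : ℕ} (h : n - 1 ≤ G.dist x y) : HasInducedCopy G (SimpleGraph.pathGraph n) := by
  obtain ⟨w, hw⟩ := hc.exists_walk_length_eq_dist x y
  have hdist : ∀ i : ℕ, i ≤ w.length → G.dist x (w.getVert i) = i := fun i hi =>
    dist_getVert_eq hc w hw hi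
  have hlen : ∀ i : Fin n, (i : ℕ) ≤ w.length := fun i => by
    rw [hw]; omega
  refine hasInducedCopy_of G _ (fun i => w.getVert i) (fun a b hab => ?_) (fun a b => ?_)
  · have ha := hdist a (hlen a); have hb := hdist b (hlen b)
    simp only [] at hab; rw [hab] at ha; exact Fin.ext (by omega)
  · rw [SimpleGraph.pathGraph_adj]
    constructor
    · rintro (hab | hab)
      · have := w.adj_getVert_succ (i := a) (by have := hlen b; omega)
        rwa [hab] at this
      · have := w.adj_getVert_succ (i := b) (by have := hlen a; omega)
        rw [hab] at this; exact this.symm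
    · intro hadj
      have ha := hdist a (hlen a); have hb := hdist b (hlen b)
      have h1 : G.dist x (w.getVert b) ≤ G.dist x (w.getVert a) + 1 := by
        calc G.dist x (w.getVert b) ≤ G.dist x (w.getVert a) + G.dist (w.getVert a) (w.getVert b) := hc.dist_triangle
          _ ≤ _ := by rw [SimpleGraph.dist_eq_one_iff_adj.mpr hadj]
      have h2 : G.dist x (w.getVert a) ≤ G.dist x (w.getVert b) + 1 := by
        calc G.dist x (w.getVert a) ≤ G.dist x (w.getVert b) + G.dist (w.getVert b) (w.getVert a) := hc.dist_triangle
          _ ≤ _ := by rw [SimpleGraph.dist_eq_one_iff_adj.mpr hadj.symm]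
      have hne : w.getVert a ≠ w.getVert b := hadj.ne
      have : (a : ℕ) ≠ b := fun hh => hne (by rw [hh])
      omega

lemma ramsey_chain {α C : Type*} [DecidableEq α] [DecidableEq C] [Fintype C]
    (hr : 2 ≤ Fintype.card C) (c : α → α → C) :
    ∀ (m : ℕ) (S : Finset α), Fintype.card C ^ m ≤ S.card →
    ∃ (v : Fin m → α) (k : Fin m → C), (∀ i, v i ∈ S) ∧
      (∀ i j : Fin m, i < j → c (v i) (v j) = k i ∧ v i ≠ v j) := by
  set r := Fintype.card C with hrdef
  intro m
  induction m with
  | zero => exact fun S _ => ⟨Fin.elim0, Fin.elim0, fun i => i.elim0, fun i => i.elim0⟩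
  | succ m ih =>
    intro S hS
    have hrm : 1 ≤ r ^ m := Nat.one_le_pow _ _ (by omega)
    have hrm1 : r ^ m ≤ r ^ (m+1) := Nat.pow_le_pow_right (by omega) (by omega)
    have hrr : r ^ (m+1) = r * r ^ m := by rw [pow_succ]; ring
    have hx : S.Nonempty := Finset.card_pos.mp (lt_of_lt_of_le (by omega) hS)
    obtain ⟨x, hxS⟩ := hx
    set T := S.erase x with hT
    have hTcard : S.card - 1 ≤ T.card := by rw [hT, Finset.card_erase_of_mem hxS]
    have hpigeon : ∃ k₀ ∈ (Finset.univ : Finset C),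
        (r ^ m - 1) < (T.filter (fun y => c x y = k₀)).card := by
      apply Finset.exists_lt_card_fiber_of_mul_lt_card_of_maps_to
      · intro a _; exact Finset.mem_univ _
      · have : (Finset.univ : Finset C).card * (r ^ m - 1) = r * r ^ m - r := by
          rw [Finset.card_univ, ← hrdef, Nat.mul_sub, mul_one]
        rw [this]
        have h2 : 2 ≤ r * r ^ m := le_trans hr (Nat.le_mul_of_pos_right _ (by omega))
        have h3 : r * r ^ m ≤ S.card := by rw [← hrr]; exact hS
        omega
    obtain ⟨k₀, _, hk₀⟩ := hpigeon
    set S' := T.filter (fun y => c x y = k₀) with hS'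
    obtain ⟨v', k', hv'S, hchain⟩ := ih S' (by omega)
    have hmemS' : ∀ i', v' i' ∈ T ∧ c x (v' i') = k₀ := by
      intro i'; have := hv'S i'; rw [hS', Finset.mem_filter] at this; exact this
    refine ⟨Fin.cons x v', Fin.cons k₀ k', ?_, ?_⟩
    · intro i
      induction i using Fin.cases with
      | zero => simpa using hxS
      | succ i' =>
        simp only [Fin.cons_succ]
        exact Finset.mem_of_mem_erase (hmemS' i').1
    · intro i j hij
      induction i using Fin.cases with
      | zero =>
        induction j using Fin.cases with
        | zero => exact absurd hij (lt_irrefl _)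
        | succ j' =>
          simp only [Fin.cons_zero, Fin.cons_succ]
          exact ⟨(hmemS' j').2, fun h => (Finset.ne_of_mem_erase (hmemS' j').1) h.symm⟩
      | succ i' =>
        induction j using Fin.cases with
        | zero => exact absurd hij (Fin.not_lt_zero _)
        | succ j' =>
          simp only [Fin.cons_succ]
          exact hchain i' j' (Fin.succ_lt_succ_iff.mp hij)

lemma ramsey {α C : Type*} [DecidableEq α] [DecidableEq C] [Fintype C]
    (hr : 2 ≤ Fintype.card C) (c : α → α → C) (t : ℕ) (S : Finset α)
    (hS : Fintype.card C ^ (Fintype.card C * t) ≤ S.card) :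
    ∃ (e : Fin t → α) (k₀ : C), Function.Injective e ∧ (∀ j, e j ∈ S) ∧
      ∀ a b : Fin t, a < b → c (e a) (e b) = k₀ := by
  classical
  set r := Fintype.card C with hrdef
  obtain ⟨v, k, hvS, hchain⟩ := ramsey_chain hr c (r * t) S hS
  rcases Nat.eq_zero_or_pos t with ht | ht
  · subst ht
    have hC : Nonempty C := Fintype.card_pos_iff.mp (by omega)
    obtain ⟨k₀⟩ := hC
    exact ⟨Fin.elim0, k₀, fun i => i.elim0, fun i => i.elim0, fun i => i.elim0⟩
  have hpigeon : ∃ k₀ ∈ (Finset.univ : Finset C),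
      (t - 1) < ((Finset.univ : Finset (Fin (r * t))).filter (fun i => k i = k₀)).card := by
    apply Finset.exists_lt_card_fiber_of_mul_lt_card_of_maps_to
    · intro a _; exact Finset.mem_univ _
    · rw [Finset.card_univ, Finset.card_univ, ← hrdef, Fintype.card_fin, Nat.mul_sub]
      have : 1 * t ≤ r * t := Nat.mul_le_mul_right _ (by omega)
      have hrpos : 1 ≤ r := by omega
      have := Nat.mul_le_mul_left r ht
      omega
  obtain ⟨k₀, _, hk₀⟩ := hpigeon
  set I := (Finset.univ : Finset (Fin (r * t))).filter (fun i => k i = k₀) with hI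
  have hIcard : t ≤ I.card := by omega
  obtain ⟨J, hJI, hJ⟩ := Finset.exists_subset_card_eq hIcard
  set o := J.orderIsoOfFin hJ with ho
  refine ⟨fun a => v (o a), k₀, ?_, fun j => hvS _, ?_⟩
  · intro a b hab
    rcases lt_trichotomy a b with h | h | h
    · exact absurd hab (hchain _ _ (o.strictMono h)).2
    · exact h
    · exact absurd hab.symm (hchain _ _ (o.strictMono h)).2
  · intro a b hab
    have h1 := (hchain (o a) (o b) (o.strictMono hab)).1
    have h2 : k (o a : Fin (r * t)) = k₀ := by
      have := hJI (o a).2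
      rw [hI, Finset.mem_filter] at this
      exact this.2
    rw [h1, h2]

lemma exists_disjoint_edges (M : ℕ)
    (h : ∀ s : Set V, (∀ ⦃u w⦄, G.Adj u w → u ∈ s ∨ w ∈ s) → 2 * M ≤ s.ncard) :
    ∃ f : Fin M × Bool → V, Function.Injective f ∧
      ∀ i, G.Adj (f (i, false)) (f (i, true)) := by
  classical
  induction M with
  | zero =>
    exact ⟨fun p => p.1.elim0, fun a => a.1.elim0, fun i => i.elim0⟩
  | succ M ih =>
    obtain ⟨f, hfinj, hfadj⟩ := ih (fun s hs => by have := h s hs; omega)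
    have hcard : (Set.range f).ncard = 2 * M := by
      rw [← Set.image_univ, ← Finset.coe_univ, ← Finset.coe_image,
        Set.ncard_coe_finset, Finset.card_image_of_injective _ hfinj]
      simp [mul_comm]
    have hnc : ¬ (∀ ⦃u w⦄, G.Adj u w → u ∈ Set.range f ∨ w ∈ Set.range f) := by
      intro hcov
      have := h _ hcov
      omega
    push_neg at hnc
    obtain ⟨u, w, hadj, hu, hw⟩ := hnc
    have huw : u ≠ w := hadj.ne
    refine ⟨fun p => if hp : (p.1 : ℕ) < M then f (⟨p.1, hp⟩, p.2)
      else (cond p.2 w u), ?_, ?_⟩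
    · rintro ⟨i, b⟩ ⟨j, b'⟩ hab
      simp only at hab
      by_cases h1 : (i : ℕ) < M <;> by_cases h2 : (j : ℕ) < M
      · rw [dif_pos h1, dif_pos h2] at hab
        have := hfinj hab
        simp only [Prod.mk.injEq, Fin.mk.injEq] at this
        exact Prod.ext (Fin.ext this.1) this.2
      · exfalso
        rw [dif_pos h1, dif_neg h2] at hab
        cases b' <;> simp only [Bool.cond_false, Bool.cond_true] at hab
        · exact hu ⟨_, hab⟩
        · exact hw ⟨_, hab⟩
      · exfalso
        rw [dif_neg h1, dif_pos h2] at hab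
        cases b <;> simp only [Bool.cond_false, Bool.cond_true] at hab
        · exact hu ⟨_, hab.symm⟩
        · exact hw ⟨_, hab.symm⟩
      · rw [dif_neg h1, dif_neg h2] at hab
        cases b <;> cases b' <;>
          simp only [Bool.cond_false, Bool.cond_true] at hab
        · exact congrArg₂ Prod.mk (Fin.ext (show (i:ℕ) = j by omega)) rfl
        · exact absurd hab huw
        · exact absurd hab.symm huw
        · exact congrArg₂ Prod.mk (Fin.ext (show (i:ℕ) = j by omega)) rfl
    · intro i
      by_cases hi : (i : ℕ) < M
      · simp only [dif_pos hi]
        exact hfadj ⟨i, hi⟩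
      · simp only [dif_neg hi, Bool.cond_false, Bool.cond_true]
        exact hadj

lemma exists_parent (hc : G.Connected) {r x : V} {d : ℕ} (hd : G.dist r x = d + 1) :
    ∃ p, G.Adj p x ∧ G.dist r p = d := by
  obtain ⟨w, hw⟩ := hc.exists_walk_length_eq_dist r x
  refine ⟨w.getVert d, ?_, ?_⟩
  · have hw' : w.length = d + 1 := by rw [hw, hd]
    have h1 := w.adj_getVert_succ (i := d) (by omega)
    have hx : w.getVert (d+1) = x := by
      have h2 := w.getVert_length
      rw [hw'] at h2
      exact h2
    rwa [hx] at h1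
  · exact dist_getVert_eq hc w hw (by rw [hw, hd]; omega)

/-- From many disjoint edges whose first endpoints are all at distance `d` from `r`,
extract a "raw spider": a center `u` with `K` legs. -/
lemma exists_raw_spider (hc : G.Connected) (r : V) (K : ℕ) (hK : 1 ≤ K) :
    ∀ (d q : ℕ) (f : Fin q × Bool → V), Function.Injective f →
      (∀ i, G.Adj (f (i, false)) (f (i, true))) →
      (∀ i, G.dist r (f (i, false)) = d) → K ^ d < q →
    ∃ (u : V) (g : Fin K × Bool → V), Function.Injective g ∧
      (∀ i, G.Adj (g (i, false)) (g (i, true))) ∧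
      (∀ i, G.Adj u (g (i, false))) ∧ (∀ p, g p ≠ u) := by
  classical
  intro d
  induction d with
  | zero =>
    intro q f hfinj _ hfd hq
    exfalso
    have hq2 : 2 ≤ q := by have : K ^ 0 = 1 := pow_zero K; omega
    have key : ∀ i : Fin q, f (i, false) = r := by
      intro i
      have h1 := hfd i
      rw [SimpleGraph.dist_eq_zero_iff_eq_or_not_reachable] at h1
      rcases h1 with h1 | h1
      · exact h1.symm
      · exact absurd (hc.preconnected r _) h1
    have h0 : ((⟨0, by omega⟩ : Fin q), false) ≠ ((⟨1, by omega⟩ : Fin q), false) := by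
      intro h
      have := congrArg (fun p => (p.1 : ℕ)) h
      simpa using this
    exact h0 (hfinj ((key ⟨0, by omega⟩).trans (key ⟨1, by omega⟩).symm))
  | succ d ih =>
    intro q f hfinj hfadj hfd hq
    -- choose parents
    have hpar : ∀ i : Fin q, ∃ p, G.Adj p (f (i, false)) ∧ G.dist r p = d :=
      fun i => exists_parent hc (hfd i)
    choose P hPadj hPd using hpar
    by_cases hbig : ∃ u : V, K + 1 ≤ ((univ : Finset (Fin q)).filter (fun i => P i = u)).card
    · obtain ⟨u, hu⟩ := hbig
      -- at most one leg has its far end equal to u; filter those out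
      set Iu := (univ : Finset (Fin q)).filter (fun i => P i = u) with hIu
      set I := Iu.filter (fun i => ¬ f (i, true) = u) with hI
      have hIcard : K ≤ I.card := by
        have hsub : Iu.filter (fun i => f (i, true) = u) ⊆ {j | f (j, true) = u}.toFinset := by
          intro a ha; simp only [Set.mem_toFinset, Set.mem_setOf_eq]
          exact (Finset.mem_filter.mp ha).2
        have hone : (Iu.filter (fun i => f (i, true) = u)).card ≤ 1 := by
          refine Finset.card_le_one.mpr ?_
          intro a ha b hb
          have ha' := (Finset.mem_filter.mp ha).2
          have hb' := (Finset.mem_filter.mp hb).2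
          have := hfinj (ha'.trans hb'.symm)
          simpa using this
        have hsplit := Finset.card_filter_add_card_filter_not
          (s := Iu) (p := fun i => f (i, true) = u)
        rw [hI]
        omega
      obtain ⟨e, heinj, heI⟩ := exists_inj_fun I K hIcard
      refine ⟨u, fun p => f (e p.1, p.2), ?_, fun i => hfadj (e i), fun i => ?_, ?_⟩
      · intro a b hab
        have := hfinj hab
        simp only [Prod.mk.injEq] at this
        exact Prod.ext (heinj this.1) this.2
      · have hmem := heI i
        rw [hI, Finset.mem_filter, hIu, Finset.mem_filter] at hmem
        rw [← hmem.1.2]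
        exact hPadj (e i)
      · rintro ⟨i, b⟩
        have hmem := heI i
        rw [hI, Finset.mem_filter, hIu, Finset.mem_filter] at hmem
        cases b
        · -- first endpoint: distance d+1 vs d for u
          intro hcon
          have h1 := hfd (e i)
          have h2 : G.dist r u = d := hmem.1.2 ▸ hPd (e i)
          rw [show f (e i, false) = u from hcon] at h1
          omega
        · exact hmem.2
    · push_neg at hbig
      -- all fibers small: many distinct parents
      have himg : K ^ d < ((univ : Finset (Fin q)).image P).card := by
        have hle : (univ : Finset (Fin q)).card ≤
            K * ((univ : Finset (Fin q)).image P).card := by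
          apply Finset.card_le_mul_card_image
          intro a _
          have := hbig a
          omega
        rw [Finset.card_univ, Fintype.card_fin] at hle
        have hKq : K * K ^ d < q := by
          calc K * K ^ d = K ^ (d+1) := by rw [pow_succ]; ring
            _ < q := hq
        by_contra hcon
        push_neg at hcon
        have := Nat.mul_le_mul_left K hcon
        omega
      obtain ⟨e, heinj, heI⟩ := exists_inj_fun ((univ : Finset (Fin q)).image P)
        (K ^ d + 1) himg
      have hsel : ∀ j : Fin (K ^ d + 1), ∃ i : Fin q, P i = e j := by
        intro j
        have := heI j
        rw [Finset.mem_image] at this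
        obtain ⟨i, _, hi⟩ := this
        exact ⟨i, hi⟩
      choose idx hidx using hsel
      have hidxinj : Function.Injective idx := by
        intro a b hab
        apply heinj
        rw [← hidx a, ← hidx b, hab]
      -- new family: (parent, old first endpoint)
      refine ih (K ^ d + 1) (fun p => cond p.2 (f (idx p.1, false)) (e p.1)) ?_ ?_ ?_ (by omega)
      · rintro ⟨a, b⟩ ⟨a', b'⟩ hab
        simp only at hab
        have hdiff : ∀ (x : Fin (K ^ d + 1)) (y : Fin (K ^ d + 1)),
            e x ≠ f (idx y, false) := by
          intro x y hcon
          have h1 : G.dist r (e x) = d := by rw [← hidx x]; exact hPd (idx x)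
          have h2 := hfd (idx y)
          rw [hcon] at h1
          omega
        cases b <;> cases b' <;> simp only [Bool.cond_false, Bool.cond_true] at hab
        · exact congrArg₂ Prod.mk (heinj hab) rfl
        · exact absurd hab (hdiff _ _)
        · exact absurd hab.symm (hdiff _ _)
        · have := hfinj hab
          simp only [Prod.mk.injEq] at this
          exact congrArg₂ Prod.mk (hidxinj this.1) rfl
      · intro i
        simp only [Bool.cond_false, Bool.cond_true]
        rw [← hidx i]
        exact hPadj (idx i)
      · intro i
        simp only [Bool.cond_false]
        rw [← hidx i]
        exact hPd (idx i)

lemma iteb {p : Prop} [Decidable p] {bb : Bool} (h : (if p then true else false) = bb) :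
    p ↔ bb = true := by
  split_ifs at h with hp <;> simp [hp, ← h]


section
variable {V : Type*} {G : SimpleGraph V}
lemma cleanup (n m : ℕ) (hm : 2 * 16 ^ (16 * (2 * n)) ≤ m) (u : V)
    (g : Fin m × Bool → V)
    (hginj : Function.Injective g)
    (hlegs : ∀ i, G.Adj (g (i, false)) (g (i, true)))
    (hcen : ∀ i, G.Adj u (g (i, false)))
    (hne : ∀ p, g p ≠ u) :
    HasInducedCopy G (⊤ : SimpleGraph (Fin n)) ∨
    HasInducedCopy G (completeBipartiteGraph (Fin n) (Fin n)) ∨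
    HasInducedCopy G (Sgraph2 n) ∨
    HasInducedCopy G (Fgraph n) := by
  classical
  have hcpos : 1 ≤ 16 ^ (16 * (2 * n)) := Nat.one_le_pow _ _ (by omega)
  -- Step A : uniformize the flag G.Adj u (g (i,true))
  have hpigeon : ∃ b ∈ (Finset.univ : Finset Bool), (16 ^ (16 * (2 * n)) - 1) <
      ((Finset.univ : Finset (Fin m)).filter
        (fun i => (if G.Adj u (g (i, true)) then true else false) = b)).card := by
    apply Finset.exists_lt_card_fiber_of_mul_lt_card_of_maps_to
    · intro a _; exact Finset.mem_univ _
    · rw [Finset.card_univ, Finset.card_univ, Fintype.card_fin, Fintype.card_bool]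
      omega
  obtain ⟨b, _, hb⟩ := hpigeon
  set c := 16 ^ (16 * (2 * n)) with hc
  obtain ⟨e0, he0inj, he0mem⟩ := exists_inj_fun
    ((Finset.univ : Finset (Fin m)).filter
      (fun i => (if G.Adj u (g (i, true)) then true else false) = b)) c (by omega)
  have hflag : ∀ j : Fin c, G.Adj u (g (e0 j, true)) ↔ b = true := by
    intro j
    have := he0mem j
    rw [Finset.mem_filter] at this
    exact iteb this.2
  -- Step B : Ramsey over adjacency patterns between legs
  set X : Fin c → V := fun j => g (e0 j, false) with hX
  set Y : Fin c → V := fun j => g (e0 j, true) with hY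
  set col : Fin c → Fin c → Bool × Bool × Bool × Bool := fun i j =>
    ((if G.Adj (X i) (X j) then true else false),
     (if G.Adj (X i) (Y j) then true else false),
     (if G.Adj (Y i) (X j) then true else false),
     (if G.Adj (Y i) (Y j) then true else false)) with hcol
  have hCcard : Fintype.card (Bool × Bool × Bool × Bool) = 16 := by simp
  obtain ⟨e1, k₀, he1inj, _, hmono⟩ := ramsey (by rw [hCcard]; norm_num) col (2 * n)
    (Finset.univ : Finset (Fin c)) (by rw [hCcard, Finset.card_univ, Fintype.card_fin, hc])
  obtain ⟨b₁, b₂, b₃, b₄⟩ := k₀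
  set XX : Fin (2 * n) → V := fun a => X (e1 a) with hXX
  set YY : Fin (2 * n) → V := fun a => Y (e1 a) with hYY
  have hp1 : ∀ a b : Fin (2 * n), a < b → (G.Adj (XX a) (XX b) ↔ b₁ = true) := by
    intro a b' hab
    have := hmono a b' hab
    rw [hcol, Prod.ext_iff, Prod.ext_iff, Prod.ext_iff] at this
    exact iteb this.1
  have hp2 : ∀ a b : Fin (2 * n), a < b → (G.Adj (XX a) (YY b) ↔ b₂ = true) := by
    intro a b' hab
    have := hmono a b' hab
    rw [hcol, Prod.ext_iff, Prod.ext_iff, Prod.ext_iff] at this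
    exact iteb this.2.1
  have hp3 : ∀ a b : Fin (2 * n), a < b → (G.Adj (YY a) (XX b) ↔ b₃ = true) := by
    intro a b' hab
    have := hmono a b' hab
    rw [hcol, Prod.ext_iff, Prod.ext_iff, Prod.ext_iff] at this
    exact iteb this.2.2.1
  have hp4 : ∀ a b : Fin (2 * n), a < b → (G.Adj (YY a) (YY b) ↔ b₄ = true) := by
    intro a b' hab
    have := hmono a b' hab
    rw [hcol, Prod.ext_iff, Prod.ext_iff, Prod.ext_iff] at this
    exact iteb this.2.2.2
  -- basic distinctness facts
  have hkey : Function.Injective (fun p : Fin (2 * n) × Bool => g (e0 (e1 p.1), p.2)) := by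
    rintro ⟨a, w⟩ ⟨a', w'⟩ h
    have := hginj h
    simp only [Prod.mk.injEq] at this
    exact Prod.ext (he1inj (he0inj this.1)) this.2
  have hXXinj : Function.Injective XX := by
    intro a b h
    have := hkey (a₁ := (a, false)) (a₂ := (b, false)) (by simpa using h)
    simpa using this
  have hYYinj : Function.Injective YY := by
    intro a b h
    have := hkey (a₁ := (a, true)) (a₂ := (b, true)) (by simpa using h)
    simpa using this
  have hXYne : ∀ a b, XX a ≠ YY b := by
    intro a b h
    have := hkey (a₁ := (a, false)) (a₂ := (b, true)) (by simpa using h)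
    simp at this
  have hXu : ∀ a, XX a ≠ u := fun a => hne _
  have hYu : ∀ a, YY a ≠ u := fun a => hne _
  have hUXX : ∀ a, G.Adj u (XX a) := fun a => hcen _
  have hXXYY : ∀ a, G.Adj (XX a) (YY a) := fun a => hlegs _
  have hUYY : ∀ a, G.Adj u (YY a) ↔ b = true := fun a => hflag _
  have hn2 : ∀ i : Fin n, (i : ℕ) < 2 * n := fun i => by omega
  have hn2' : ∀ i : Fin n, n + (i : ℕ) < 2 * n := fun i => by omega
  have hval : ∀ {i j : Fin n}, ((⟨(i : ℕ), hn2 i⟩ : Fin (2 * n)) = ⟨(j : ℕ), hn2 j⟩) → i = j := by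
    intro i j h
    rw [Fin.mk.injEq] at h
    exact Fin.ext h
  have hval' : ∀ {i j : Fin n}, ((⟨n + (i : ℕ), hn2' i⟩ : Fin (2 * n)) = ⟨n + (j : ℕ), hn2' j⟩) → i = j := by
    intro i j h
    rw [Fin.mk.injEq] at h
    exact Fin.ext (by omega)
  by_cases hcase1 : b₁ = true
  · -- the XX's form a clique: induced K_n
    left
    have hclique : ∀ a b' : Fin (2 * n), a ≠ b' → G.Adj (XX a) (XX b') := by
      intro a b' hab
      rcases lt_or_gt_of_ne hab with h | h
      · exact (hp1 a b' h).mpr hcase1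
      · exact ((hp1 b' a h).mpr hcase1).symm
    refine hasInducedCopy_of G _ (fun i : Fin n => XX ⟨(i : ℕ), hn2 i⟩) ?_ ?_
    · intro a b' hab
      exact hval (hXXinj hab)
    · intro a b'
      simp only [top_adj]
      constructor
      · intro hne'
        refine hclique _ _ (fun hcon => hne' (hval hcon))
      · intro hadj hcon
        subst hcon
        exact G.irrefl hadj
  · by_cases hcase4 : b₄ = true
    · -- the YY's form a clique: induced K_n
      left
      have hclique : ∀ a b' : Fin (2 * n), a ≠ b' → G.Adj (YY a) (YY b') := by
        intro a b' hab
        rcases lt_or_gt_of_ne hab with h | h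
        · exact (hp4 a b' h).mpr hcase4
        · exact ((hp4 b' a h).mpr hcase4).symm
      refine hasInducedCopy_of G _ (fun i : Fin n => YY ⟨(i : ℕ), hn2 i⟩) ?_ ?_
      · intro a b' hab
        exact hval (hYYinj hab)
      · intro a b'
        simp only [top_adj]
        constructor
        · intro hne'
          refine hclique _ _ (fun hcon => hne' (hval hcon))
        · intro hadj hcon
          subst hcon
          exact G.irrefl hadj
    · -- both XX and YY independent
      have hXXn : ∀ a b' : Fin (2 * n), ¬ G.Adj (XX a) (XX b') := by
        intro a b' hadj
        rcases lt_trichotomy a b' with h | h | h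
        · exact hcase1 ((hp1 a b' h).mp hadj)
        · subst h; exact G.irrefl hadj
        · exact hcase1 ((hp1 b' a h).mp hadj.symm)
      have hYYn : ∀ a b' : Fin (2 * n), ¬ G.Adj (YY a) (YY b') := by
        intro a b' hadj
        rcases lt_trichotomy a b' with h | h | h
        · exact hcase4 ((hp4 a b' h).mp hadj)
        · subst h; exact G.irrefl hadj
        · exact hcase4 ((hp4 b' a h).mp hadj.symm)
      by_cases hcase2 : b₂ = true
      · -- K_{n,n}
        right; left
        by_cases hcase3 : b₃ = true
        · -- all cross edges
          have hall : ∀ a b' : Fin (2 * n), G.Adj (XX a) (YY b') := by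
            intro a b'
            rcases lt_trichotomy a b' with h | h | h
            · exact (hp2 a b' h).mpr hcase2
            · subst h; exact hXXYY a
            · exact ((hp3 b' a h).mpr hcase3).symm
          refine hasInducedCopy_of G _ (Sum.elim
            (fun i : Fin n => XX ⟨(i : ℕ), hn2 i⟩)
            (fun j : Fin n => YY ⟨(j : ℕ), hn2 j⟩)) ?_ ?_
          · rintro (a | a) (b' | b') h <;> simp only [Sum.elim_inl, Sum.elim_inr] at h
            · exact congrArg Sum.inl (hval (hXXinj h))
            · exact absurd h (hXYne _ _)
            · exact absurd h.symm (hXYne _ _)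
            · exact congrArg Sum.inr (hval (hYYinj h))
          · rintro (a | a) (b' | b') <;>
              simp only [Sum.elim_inl, Sum.elim_inr]
            · exact iff_of_false (by simp) (hXXn _ _)
            · exact iff_of_true (by simp) (hall _ _)
            · exact iff_of_true (by simp) ((hall _ _).symm)
            · exact iff_of_false (by simp) (hYYn _ _)
        · -- half graph, low XX's vs high YY's
          have hcross : ∀ i j : Fin n, G.Adj (XX ⟨(i : ℕ), hn2 i⟩) (YY ⟨n + (j : ℕ), hn2' j⟩) := by
            intro i j
            exact (hp2 _ _ (by simp [Fin.lt_def]; omega)).mpr hcase2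
          refine hasInducedCopy_of G _ (Sum.elim
            (fun i : Fin n => XX ⟨(i : ℕ), hn2 i⟩)
            (fun j : Fin n => YY ⟨n + (j : ℕ), hn2' j⟩)) ?_ ?_
          · rintro (a | a) (b' | b') h <;> simp only [Sum.elim_inl, Sum.elim_inr] at h
            · exact congrArg Sum.inl (hval (hXXinj h))
            · exact absurd h (hXYne _ _)
            · exact absurd h.symm (hXYne _ _)
            · exact congrArg Sum.inr (hval' (hYYinj h))
          · rintro (a | a) (b' | b') <;>
              simp only [Sum.elim_inl, Sum.elim_inr]
            · exact iff_of_false (by simp) (hXXn _ _)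
            · exact iff_of_true (by simp) (hcross _ _)
            · exact iff_of_true (by simp) ((hcross _ _).symm)
            · exact iff_of_false (by simp) (hYYn _ _)
      · by_cases hcase3 : b₃ = true
        · -- half graph the other way: high XX's vs low YY's
          right; left
          have hcross : ∀ i j : Fin n, G.Adj (XX ⟨n + (i : ℕ), hn2' i⟩) (YY ⟨(j : ℕ), hn2 j⟩) := by
            intro i j
            exact ((hp3 _ _ (by simp [Fin.lt_def]; omega)).mpr hcase3).symm
          refine hasInducedCopy_of G _ (Sum.elim
            (fun i : Fin n => XX ⟨n + (i : ℕ), hn2' i⟩)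
            (fun j : Fin n => YY ⟨(j : ℕ), hn2 j⟩)) ?_ ?_
          · rintro (a | a) (b' | b') h <;> simp only [Sum.elim_inl, Sum.elim_inr] at h
            · exact congrArg Sum.inl (hval' (hXXinj h))
            · exact absurd h (hXYne _ _)
            · exact absurd h.symm (hXYne _ _)
            · exact congrArg Sum.inr (hval (hYYinj h))
          · rintro (a | a) (b' | b') <;>
              simp only [Sum.elim_inl, Sum.elim_inr]
            · exact iff_of_false (by simp) (hXXn _ _)
            · exact iff_of_true (by simp) (hcross _ _)
            · exact iff_of_true (by simp) ((hcross _ _).symm)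
            · exact iff_of_false (by simp) (hYYn _ _)
        · -- induced matching of legs: spider or friendship
          have hxyIff : ∀ a b' : Fin (2 * n), G.Adj (XX a) (YY b') ↔ a = b' := by
            intro a b'
            constructor
            · intro hadj
              rcases lt_trichotomy a b' with h | h | h
              · exact absurd ((hp2 a b' h).mp hadj) hcase2
              · exact h
              · exact absurd ((hp3 b' a h).mp hadj.symm) hcase3
            · rintro rfl; exact hXXYY a
          have hfinj : Function.Injective (Sum.elim (fun _ : Unit => u) (Sum.elim
              (fun i : Fin n => XX ⟨(i : ℕ), hn2 i⟩)
              (fun j : Fin n => YY ⟨(j : ℕ), hn2 j⟩))) := by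
            rintro (a | (a | a)) (b' | (b' | b')) h <;>
              simp only [Sum.elim_inl, Sum.elim_inr] at h
            · rfl
            · exact absurd h.symm (hXu _)
            · exact absurd h.symm (hYu _)
            · exact absurd h (hXu _)
            · exact congrArg Sum.inr (congrArg Sum.inl (hval (hXXinj h)))
            · exact absurd h (hXYne _ _)
            · exact absurd h (hYu _)
            · exact absurd h.symm (hXYne _ _)
            · exact congrArg Sum.inr (congrArg Sum.inr (hval (hYYinj h)))
          have hIdx : ∀ (i j : Fin n),
              ((⟨(i : ℕ), hn2 i⟩ : Fin (2 * n)) = ⟨(j : ℕ), hn2 j⟩) ↔ i = j := by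
            intro i j
            exact ⟨fun h => hval h, by rintro rfl; rfl⟩
          by_cases hflagb : b = true
          · -- friendship graph F_n
            right; right; right
            have hUYYt : ∀ a, G.Adj u (YY a) := fun a => (hUYY a).mpr hflagb
            have hxy6 : ∀ a b' : Fin n,
                G.Adj (XX ⟨(a : ℕ), hn2 a⟩) (YY ⟨(b' : ℕ), hn2 b'⟩) ↔ a = b' :=
              fun a b' => (hxyIff _ _).trans (hIdx a b')
            have hyx8 : ∀ a b' : Fin n,
                G.Adj (YY ⟨(a : ℕ), hn2 a⟩) (XX ⟨(b' : ℕ), hn2 b'⟩) ↔ b' = a :=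
              fun a b' => (G.adj_comm _ _).trans ((hxyIff _ _).trans (hIdx b' a))
            refine hasInducedCopy_of G _ (Sum.elim (fun _ : Unit => u) (Sum.elim
              (fun i : Fin n => XX ⟨(i : ℕ), hn2 i⟩)
              (fun j : Fin n => YY ⟨(j : ℕ), hn2 j⟩))) hfinj ?_
            rintro (a | (a | a)) (b' | (b' | b')) <;>
              simp only [Sum.elim_inl, Sum.elim_inr]
            · exact iff_of_false (by simp [Fgraph]) (G.irrefl)
            · exact iff_of_true (by simp [Fgraph]) (hUXX _)
            · exact iff_of_true (by simp [Fgraph]) (hUYYt _)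
            · exact iff_of_true (by simp [Fgraph]) ((hUXX _).symm)
            · exact iff_of_false (by simp [Fgraph]) (hXXn _ _)
            · rw [hxy6 a b']
              simp [Fgraph]
            · exact iff_of_true (by simp [Fgraph]) ((hUYYt _).symm)
            · rw [hyx8 a b']
              simp [Fgraph]
            · exact iff_of_false (by simp [Fgraph]) (hYYn _ _)
          · -- spider S_n^2
            right; right; left
            have hUYYf : ∀ a, ¬ G.Adj u (YY a) := fun a h => hflagb ((hUYY a).mp h)
            have hxy6 : ∀ a b' : Fin n,
                G.Adj (XX ⟨(a : ℕ), hn2 a⟩) (YY ⟨(b' : ℕ), hn2 b'⟩) ↔ a = b' :=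
              fun a b' => (hxyIff _ _).trans (hIdx a b')
            have hyx8 : ∀ a b' : Fin n,
                G.Adj (YY ⟨(a : ℕ), hn2 a⟩) (XX ⟨(b' : ℕ), hn2 b'⟩) ↔ b' = a :=
              fun a b' => (G.adj_comm _ _).trans ((hxyIff _ _).trans (hIdx b' a))
            refine hasInducedCopy_of G _ (Sum.elim (fun _ : Unit => u) (Sum.elim
              (fun i : Fin n => XX ⟨(i : ℕ), hn2 i⟩)
              (fun j : Fin n => YY ⟨(j : ℕ), hn2 j⟩))) hfinj ?_
            rintro (a | (a | a)) (b' | (b' | b')) <;>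
              simp only [Sum.elim_inl, Sum.elim_inr]
            · exact iff_of_false (by simp [Sgraph2]) (G.irrefl)
            · exact iff_of_true (by simp [Sgraph2]) (hUXX _)
            · exact iff_of_false (by simp [Sgraph2]) (hUYYf _)
            · exact iff_of_true (by simp [Sgraph2]) ((hUXX _).symm)
            · exact iff_of_false (by simp [Sgraph2]) (hXXn _ _)
            · rw [hxy6 a b']
              simp [Sgraph2]
            · exact iff_of_false (by simp [Sgraph2]) (fun h => hUYYf _ h.symm)
            · rw [hyx8 a b']
              simp [Sgraph2]
            · exact iff_of_false (by simp [Sgraph2]) (hYYn _ _)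

end

theorem stmt6 (n : ℕ) (hn : 1 ≤ n) :
    ∃ N : ℕ, ∀ (V : Type) (_ : Fintype V) (G : SimpleGraph V),
      G.Connected → N ≤ coverNum G →
        HasInducedCopy G (SimpleGraph.pathGraph n) ∨
        HasInducedCopy G (⊤ : SimpleGraph (Fin n)) ∨
        HasInducedCopy G (completeBipartiteGraph (Fin n) (Fin n)) ∨
        HasInducedCopy G (Sgraph2 n) ∨
        HasInducedCopy G (Fgraph n) := by
  classical
  set K := 2 * 16 ^ (16 * (2 * n)) with hK
  set M := (n - 1) * K ^ n + (K ^ n + 1) with hM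
  refine ⟨2 * M, ?_⟩
  intro V _ G hconn hN
  have hKpos : 1 ≤ K := by
    rw [hK]
    have : 1 ≤ 16 ^ (16 * (2 * n)) := Nat.one_le_pow _ _ (by omega)
    omega
  have hKnpos : 1 ≤ K ^ n := Nat.one_le_pow _ _ (by omega)
  by_cases hpath : ∃ x y : V, n - 1 ≤ G.dist x y
  · obtain ⟨x, y, hxy⟩ := hpath
    exact Or.inl (induced_path_of_dist hconn hxy)
  push_neg at hpath
  have hne : Nonempty V := hconn.nonempty
  obtain ⟨r⟩ := hne
  have hn2 : 2 ≤ n := by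
    rcases Nat.lt_or_ge n 2 with h | h
    · exfalso
      have := hpath r r
      omega
    · exact h
  -- a system of M pairwise disjoint edges
  have hcov : ∀ s : Set V, (∀ ⦃u w⦄, G.Adj u w → u ∈ s ∨ w ∈ s) → 2 * M ≤ s.ncard := by
    intro s hs
    have h1 : coverNum G ≤ s.ncard := Nat.sInf_le ⟨s, hs, rfl⟩
    omega
  obtain ⟨f, hfinj, hfadj⟩ := exists_disjoint_edges M hcov
  -- pigeonhole on the distance from r of the first endpoints
  have hmaps : ∀ i ∈ (Finset.univ : Finset (Fin M)),
      G.dist r (f (i, false)) ∈ Finset.range (n - 1) := by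
    intro i _
    rw [Finset.mem_range]
    have := hpath r (f (i, false))
    omega
  have hpg : ∃ d ∈ Finset.range (n - 1), K ^ n <
      ((Finset.univ : Finset (Fin M)).filter (fun i => G.dist r (f (i, false)) = d)).card := by
    apply Finset.exists_lt_card_fiber_of_mul_lt_card_of_maps_to hmaps
    rw [Finset.card_range, Finset.card_univ, Fintype.card_fin]
    omega
  obtain ⟨d, hdmem, hd⟩ := hpg
  obtain ⟨e, heinj, hemem⟩ := exists_inj_fun _ (K ^ n + 1) hd
  have hemem' : ∀ j, G.dist r (f (e j, false)) = d := by
    intro j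
    have := hemem j
    rw [Finset.mem_filter] at this
    exact this.2
  -- extract a raw spider
  have hdn : K ^ d < K ^ n + 1 := by
    have : K ^ d ≤ K ^ n := Nat.pow_le_pow_right (by omega)
      (by rw [Finset.mem_range] at hdmem; omega)
    omega
  obtain ⟨u, g, hginj, hlegs, hcen, hneu⟩ := exists_raw_spider hconn r K hKpos d
    (K ^ n + 1) (fun p => f (e p.1, p.2))
    (by
      rintro ⟨a, w⟩ ⟨a', w'⟩ h
      have := hfinj h
      simp only [Prod.mk.injEq] at this
      exact Prod.ext (heinj this.1) this.2)
    (fun i => hfadj (e i)) hemem' hdn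
  -- clean up the spider with Ramsey
  have := cleanup n K le_rfl u g hginj hlegs hcen hneu
  tauto
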